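/- For n = 2 and m = 3, applying the transposition (1 3) = s_1 s_2 s_1 via the birational R-matrix action to (x_1, x_2, x_3) gives, for the middle vector, s_1 s_2 s_1 (x_2^{(r)}) = x_2^{(r)} · Ω_2^{(r-1)}(x_1,x_2,x_3) Ω_1^{(r)}(x_1,x_2,x_3) / [Ω_1^{(r-1)}(x_1,x_2,x_3) Ω_2^{(r)}(x_1,x_2,x_3)], where indices are mod 2 and Ω_k^{(r)}(x_1,x_2,x_3) = Σ_{ℓ=0}^{1} σ^{(r)}_{(k-1)+ℓ}(x_1,...,x_k) σ̄^{(r+k-1-ℓ)}_{(3-k)-ℓ}(x_{k+1},...,x_3). -/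

import Mathlib

open Finset

noncomputable section BirationalR

/-- A vector of reals with cyclically indexed coordinates (upper index mod `n`). -/
abbrev Vec (n : ℕ) := ZMod n → ℝ

/-- `κ_r(a,b) = Σ_{j=r}^{r+n-1} (Π_{k=r+1}^{j} b_k)(Π_{k=j+1}^{r+n-1} a_k)`, indices mod `n`. -/
def kappaF (n : ℕ) (r : ZMod n) (a b : Vec n) : ℝ :=
  ∑ d ∈ Finset.range n,
    (∏ t ∈ Finset.range d, b (r + 1 + (t : ℕ))) *
      ∏ t ∈ Finset.range (n - 1 - d), a (r + 1 + (d : ℕ) + (t : ℕ))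

/-- First component `b'` of the birational R-matrix `η(a,b) = (b',a')`:
`b'_i = b_{i+1} κ_{i+1}(a,b)/κ_i(a,b)`. -/
def etaB (n : ℕ) (a b : Vec n) : Vec n :=
  fun i => b (i + 1) * kappaF n (i + 1) a b / kappaF n i a b

/-- Second component `a'` of `η(a,b) = (b',a')`: `a'_i = a_{i-1} κ_{i-1}(a,b)/κ_i(a,b)`. -/
def etaA (n : ℕ) (a b : Vec n) : Vec n :=
  fun i => a (i - 1) * kappaF n (i - 1) a b / kappaF n i a b

/-- `η` applied to positions `(p, p+1)` of a tuple of vectors. -/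
def etaAt (n : ℕ) (p : ℕ) (X : ℕ → Vec n) : ℕ → Vec n :=
  fun q => if q = p then etaB n (X p) (X (p + 1))
    else if q = p + 1 then etaA n (X p) (X (p + 1)) else X q

/-- Action of the word `s_{w₁} s_{w₂} ⋯ s_{wₗ}` (rightmost acts first). -/
def applyWord (n : ℕ) (w : List ℕ) (X : ℕ → Vec n) : ℕ → Vec n :=
  w.foldr (etaAt n) X

/-- The tuple `(x_i, x_{i+1}, …, x_j)` as a list. -/
def seg {n : ℕ} (x : ℕ → Vec n) (i j : ℕ) : List (Vec n) :=
  (List.range (j + 1 - i)).map fun t => x (i + t)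

/-- `τ_k^{(r)}(x_1,…,x_m)`: sum over weakly increasing `i_1 ≤ … ≤ i_k`, no index used
more than `n-1` times, of `x_{i_1}^{(r)} x_{i_2}^{(r-1)} ⋯ x_{i_k}^{(r-k+1)}`.
Encoded via multiplicity functions; `τ = 0` for negative `k`. -/
def tauF (n : ℕ) (r : ZMod n) (k : ℤ) (x : List (Vec n)) : ℝ :=
  if 0 ≤ k then
    ∑ c ∈ (Fintype.piFinset fun _ : Fin x.length => Finset.range n).filter
        (fun c => ∑ i, c i = k.toNat),
      ∏ i : Fin x.length, ∏ β ∈ Finset.range (c i),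
        x.get i (r - (∑ i' ∈ Finset.univ.filter (fun i' => i' < i), c i' : ℕ) - (β : ℕ))
  else 0

/-- `σ_k^{(r)}(x_1,…,x_m) = Σ_{t=0}^{k} x_1^{(r)} ⋯ x_1^{(r-t+1)} τ_{k-t}^{(r-t)}(x_2,…,x_m)`. -/
def sigmaF (n : ℕ) (r : ZMod n) (k : ℕ) : List (Vec n) → ℝ
  | [] => if k = 0 then 1 else 0
  | y :: rest =>
      ∑ t ∈ Finset.range (k + 1),
        (∏ β ∈ Finset.range t, y (r - (β : ℕ))) * tauF n (r - (t : ℕ)) ((k : ℤ) - (t : ℤ)) rest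

/-- `σ̄_k^{(r)}(x_1,…,x_m) = Σ_{t=0}^{k} τ_{k-t}^{(r)}(x_1,…,x_{m-1}) x_m^{(r-k+t)} ⋯ x_m^{(r-k+1)}`. -/
def sigmaBarF (n : ℕ) (r : ZMod n) (k : ℕ) : List (Vec n) → ℝ
  | [] => if k = 0 then 1 else 0
  | y :: rest =>
      ∑ t ∈ Finset.range (k + 1),
        tauF n r ((k : ℤ) - (t : ℤ)) ((y :: rest).dropLast) *
          ∏ β ∈ Finset.range t,
            (y :: rest).getLast (List.cons_ne_nil y rest) (r - (k : ℕ) + 1 + (β : ℕ))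

/-- `Ω_k^{(r)}(x_i,…,x_j) = Σ_{ℓ=0}^{n-1} σ^{(r)}_{(n-1)(k-i)+ℓ}(x_i,…,x_k)
σ̄^{(r+k-i-ℓ)}_{(n-1)(j-k)-ℓ}(x_{k+1},…,x_j)`. -/
def OmegaF (n : ℕ) (r : ZMod n) (k i j : ℕ) (x : ℕ → Vec n) : ℝ :=
  ∑ ℓ ∈ Finset.range n,
    sigmaF n r ((n - 1) * (k - i) + ℓ) (seg x i k) *
      sigmaBarF n (r + (k : ℕ) - (i : ℕ) - (ℓ : ℕ)) ((n - 1) * (j - k) - ℓ) (seg x (k + 1) j)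

/-- `P_k^{(r)}(x_i,…,x_j) = Σ_{t=0}^{k} (Π_{s=0}^{t-1} x_i^{(r-s)})
σ_{(n-1)(j-i-1)}^{(r-t)}(x_i,…,x_{j-1}) (Π_{s=0}^{k-t-1} x_j^{(r-t+j-i-1-s)})`. -/
def PF (n : ℕ) (r : ZMod n) (k i j : ℕ) (x : ℕ → Vec n) : ℝ :=
  ∑ t ∈ Finset.range (k + 1),
    (∏ s ∈ Finset.range t, x i (r - (s : ℕ))) *
      sigmaF n (r - (t : ℕ)) ((n - 1) * (j - i - 1)) (seg x i (j - 1)) *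
      ∏ s ∈ Finset.range (k - t), x j (r - (t : ℕ) + (j : ℕ) - (i : ℕ) - 1 - (s : ℕ))

end BirationalR

open Finset Fintype in
theorem tau_nil (n : ℕ) (r : ZMod n) (k : ℤ) : tauF n r k [] = if k = 0 then 1 else 0 := by
  unfold tauF
  rcases le_or_gt 0 k with h | h
  · rw [if_pos h]
    simp only [List.length_nil, Finset.sum_filter, Fintype.piFinset_of_isEmpty,
      Fintype.sum_unique, Fin.sum_univ_zero, Fin.prod_univ_zero]
    have : (0 : ℕ) = k.toNat ↔ k = 0 := by omega
    simp [this]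
  · rw [if_neg (not_le.2 h), if_neg (by omega)]

open Finset Fintype in
theorem tau_one (r : ZMod 2) (k : ℤ) (y : Vec 2) :
    tauF 2 r k [y] = if k = 0 then 1 else if k = 1 then y r else 0 := by
  unfold tauF
  rcases le_or_gt 0 k with h | h
  · rw [if_pos h]
    simp only [List.length_singleton]
    have hpi : Fintype.piFinset (fun _ : Fin 1 => Finset.range 2)
        = {fun _ => 0, fun _ => 1} := by
      ext c
      simp only [Fintype.mem_piFinset, Finset.mem_range, Finset.mem_insert,
        Finset.mem_singleton, funext_iff, Fin.forall_fin_one]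
      omega
    rw [hpi, Finset.filter_insert, Finset.filter_singleton]
    simp only [Fin.sum_univ_one, Fin.prod_univ_one]
    by_cases h0 : k = 0
    · subst h0
      simp
    · by_cases h1 : k = 1
      · subst h1
        simp
      · rw [if_neg (by omega : ¬ (0:ℕ) = k.toNat), if_neg (by omega : ¬ (1:ℕ) = k.toNat)]
        simp [h0, h1]
  · rw [if_neg (not_le.2 h), if_neg (by omega), if_neg (by omega)]

theorem kappa2 (s : ZMod 2) (a b : Vec 2) : kappaF 2 s a b = a (s+1) + b (s+1) := by
  simp [kappaF, Finset.sum_range_succ, Finset.prod_range_succ]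


theorem seg11 (x : ℕ → Vec 2) : seg x 1 1 = [x 1] := by
  simp [seg, List.range_succ]
theorem seg12 (x : ℕ → Vec 2) : seg x 1 2 = [x 1, x 2] := by
  norm_num [seg, List.range_succ]
theorem seg23 (x : ℕ → Vec 2) : seg x 2 3 = [x 2, x 3] := by
  norm_num [seg, List.range_succ]
theorem seg33 (x : ℕ → Vec 2) : seg x 3 3 = [x 3] := by
  norm_num [seg, List.range_succ]

theorem zsub1 (s : ZMod 2) : s - 1 = s + 1 := by revert s; decide
theorem zadd2 (s : ZMod 2) : s + 1 + 1 = s := by revert s; decide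
theorem zneg1 (s : ZMod 2) : -1 + s = 1 + s := by revert s; decide
theorem zneg2 (s : ZMod 2) : -2 + s = s := by revert s; decide
theorem ztwo : (2 : ZMod 2) = 0 := by decide
theorem zp2 (s : ZMod 2) : 2 + s = s := by revert s; decide
theorem zp3 (s : ZMod 2) : 3 + s = 1 + s := by revert s; decide

theorem omega1 (r : ZMod 2) (x : ℕ → Vec 2) :
    OmegaF 2 r 1 1 3 x = x 2 r * x 3 (r+1) + x 3 r * x 3 (r+1) + x 1 r * x 2 (r+1) + x 1 r * x 3 (r+1) := by
  norm_num [OmegaF, seg11, seg23, sigmaF, sigmaBarF, tau_nil, tau_one,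
    Finset.sum_range_succ, Finset.prod_range_succ, zsub1, zadd2, ztwo]
  ring_nf
  try simp only [zneg1, zneg2, zp2, zp3]
  try ring

theorem omega2 (r : ZMod 2) (x : ℕ → Vec 2) :
    OmegaF 2 r 2 1 3 x = (x 1 r + x 2 r) * x 3 (r+1) + x 1 r * x 2 (r+1) + x 1 r * x 1 (r+1) := by
  norm_num [OmegaF, seg12, seg33, sigmaF, sigmaBarF, tau_nil, tau_one,
    Finset.sum_range_succ, Finset.prod_range_succ, zsub1, zadd2, ztwo]
  ring_nf
  try simp only [zneg1, zneg2, zp2, zp3]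
  try ring

theorem etaB2 (a b : Vec 2) (s : ZMod 2) :
    etaB 2 a b s = b (s+1) * (a s + b s) / (a (s+1) + b (s+1)) := by
  simp [etaB, kappa2, zadd2]

theorem etaA2 (a b : Vec 2) (s : ZMod 2) :
    etaA 2 a b s = a (s+1) * (a s + b s) / (a (s+1) + b (s+1)) := by
  simp [etaA, kappa2, zsub1, zadd2]


/-- for `n = 2`, `m = 3`, the transposition `(1 3) = s_1 s_2 s_1`
acts on the middle vector by
`s_1 s_2 s_1(x_2^{(r)}) = x_2^{(r)} Ω_2^{(r-1)} Ω_1^{(r)} / (Ω_1^{(r-1)} Ω_2^{(r)})`. -/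
theorem transposition_middle_n2_m3 (X : ℕ → Vec 2) (hX : ∀ p r, 0 < X p r)
    (r : ZMod 2) :
    applyWord 2 [1, 2, 1] X 2 r =
      X 2 r * (OmegaF 2 (r - 1) 2 1 3 X * OmegaF 2 r 1 1 3 X) /
        (OmegaF 2 (r - 1) 1 1 3 X * OmegaF 2 r 2 1 3 X) := by
  have a0 := hX 1 r; have a1 := hX 1 (r+1)
  have b0 := hX 2 r; have b1 := hX 2 (r+1)
  have c0 := hX 3 r; have c1 := hX 3 (r+1)
  have hk0 : (0:ℝ) < X 1 (r+1) + X 2 (r+1) := by linarith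
  have hk1 : (0:ℝ) < X 1 r + X 2 r := by linarith
  set k0 : ℝ := X 1 (r+1) + X 2 (r+1) with hk0d
  set k1 : ℝ := X 1 r + X 2 r with hk1d
  have hM0 : (0:ℝ) < X 1 r * k0 + X 3 (r+1) * k1 := by positivity
  have hM1 : (0:ℝ) < X 1 (r+1) * k1 + X 3 r * k0 := by positivity
  set M0 : ℝ := X 1 r * k0 + X 3 (r+1) * k1 with hM0d
  set M1 : ℝ := X 1 (r+1) * k1 + X 3 r * k0 with hM1d
  -- applyWord unfolding
  have hAW : applyWord 2 [1, 2, 1] X 2 r =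
      etaA 2 (etaB 2 (X 1) (X 2)) (etaB 2 (etaA 2 (X 1) (X 2)) (X 3)) r := by
    norm_num [applyWord, etaAt]
  -- component values
  have hZ1r : etaB 2 (X 1) (X 2) r = X 2 (r+1) * k1 / k0 := by
    rw [etaB2]
  have hZ1r1 : etaB 2 (X 1) (X 2) (r+1) = X 2 r * k0 / k1 := by
    rw [etaB2]; simp only [zadd2]; rfl
  have hAr : etaA 2 (X 1) (X 2) r = X 1 (r+1) * k1 / k0 := by
    rw [etaA2]
  have hAr1 : etaA 2 (X 1) (X 2) (r+1) = X 1 r * k0 / k1 := by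
    rw [etaA2]; simp only [zadd2]; rfl
  have hnum : etaA 2 (X 1) (X 2) r + X 3 r = M1 / k0 := by
    rw [hAr, hM1d]; field_simp
  have hden : etaA 2 (X 1) (X 2) (r+1) + X 3 (r+1) = M0 / k1 := by
    rw [hAr1, hM0d]; field_simp
  have hZ2r : etaB 2 (etaA 2 (X 1) (X 2)) (X 3) r = X 3 (r+1) * M1 * k1 / (k0 * M0) := by
    rw [etaB2, hnum, hden]
    field_simp
  have hZ2r1 : etaB 2 (etaA 2 (X 1) (X 2)) (X 3) (r+1) = X 3 r * M0 * k0 / (k1 * M1) := by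
    rw [etaB2, zadd2, hnum, hden]
    field_simp
  rw [hAW, etaA2, hZ1r, hZ1r1, hZ2r, hZ2r1]
  have hs1 : X 2 (r+1) * k1 / k0 + X 3 (r+1) * M1 * k1 / (k0 * M0) =
      (X 2 (r+1) * M0 + X 3 (r+1) * M1) * k1 / (k0 * M0) := by
    field_simp
  have hs2 : X 2 r * k0 / k1 + X 3 r * M0 * k0 / (k1 * M1) =
      (X 2 r * M1 + X 3 r * M0) * k0 / (k1 * M1) := by
    field_simp
  rw [hs1, hs2]
  -- Omega values
  rw [zsub1, omega1 r X, omega2 r X, omega1 (r+1) X, omega2 (r+1) X]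
  simp only [zadd2]
  have hO1 : (0:ℝ) < X 2 r * X 3 (r+1) + X 3 r * X 3 (r+1) + X 1 r * X 2 (r+1) + X 1 r * X 3 (r+1) := by positivity
  have hO2 : (0:ℝ) < (X 1 r + X 2 r) * X 3 (r+1) + X 1 r * X 2 (r+1) + X 1 r * X 1 (r+1) := by positivity
  have hO1' : (0:ℝ) < X 2 (r+1) * X 3 r + X 3 (r+1) * X 3 r + X 1 (r+1) * X 2 r + X 1 (r+1) * X 3 r := by positivity
  have hO2' : (0:ℝ) < (X 1 (r+1) + X 2 (r+1)) * X 3 r + X 1 (r+1) * X 2 r + X 1 (r+1) * X 1 r := by positivity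
  have hS2 : (0:ℝ) < X 2 r * M1 + X 3 r * M0 := by positivity
  rw [hM0d, hM1d, hk0d, hk1d] at *
  field_simp
  ring
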